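/- arXiv:2309.14024 — 7 statements merged into one kernel-verified Lean document; each statement's English description precedes it below -/
import Mathlib

section
/- Let K be an algebraically closed field, let f₁,…,f_m ∈ K[x₁,…,xₙ] be homogeneous polynomials, and let (F_i)_{i∈I} be a family of homogeneous polynomials in K[x₁,…,xₙ] such that every F_i vanishes at every point of Kⁿ at which all of f₁,…,f_m vanish. Then there exists an integer r ≥ 1 such that every product of r members of the family (with repetitions allowed), i.e. F_{i₁}·F_{i₂}⋯F_{i_r} for any choice i₁,…,i_r ∈ I, lies in the ideal (f₁,…,f_m). -/
theorem hilbert_homogeneous_nullstellensatz {K : Type*} [Field K] [IsAlgClosed K]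
    {n m : ℕ} {I : Type*}
    (f : Fin m → MvPolynomial (Fin n) K) (df : Fin m → ℕ)
    (hf : ∀ j, (f j).IsHomogeneous (df j))
    (F : I → MvPolynomial (Fin n) K) (dF : I → ℕ)
    (hF : ∀ i, (F i).IsHomogeneous (dF i))
    (hvan : ∀ i, ∀ ξ : Fin n → K, (∀ j, MvPolynomial.eval ξ (f j) = 0) →
      MvPolynomial.eval ξ (F i) = 0) :
    ∃ r : ℕ, 1 ≤ r ∧ ∀ g : Fin r → I,
      (∏ t, F (g t)) ∈ Ideal.span (Set.range f) := by
  set J : Ideal (MvPolynomial (Fin n) K) := Ideal.span (Set.range f) with hJ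
  have hrad : ∀ i, F i ∈ J.radical := by
    intro i
    rw [← MvPolynomial.vanishingIdeal_zeroLocus_eq_radical (K := K),
      MvPolynomial.mem_vanishingIdeal_iff]
    intro x hx
    refine hvan i x fun j => ?_
    rw [hJ, MvPolynomial.zeroLocus_span] at hx
    exact hx (f j) ⟨j, rfl⟩
  obtain ⟨N, hN⟩ := Ideal.exists_radical_pow_le_of_fg J (IsNoetherian.noetherian _)
  refine ⟨max N 1, le_max_right _ _, fun g => ?_⟩
  have h1 : (∏ t, F (g t)) ∈ J.radical ^ (max N 1) := by
    have := Ideal.prod_mem_prod (s := (Finset.univ : Finset (Fin (max N 1))))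
      (I := fun _ => J.radical) (x := fun t => F (g t)) (fun t _ => hrad (g t))
    simpa [Finset.prod_const] using this
  exact (le_trans (Ideal.pow_le_pow_right (le_max_left N 1)) hN) h1
end

section
/- Every proper ideal a of a commutative Noetherian ring R admits a primary decomposition: there exist finitely many primary ideals q₁,…,q_s of R such that a = q₁ ∩ ⋯ ∩ q_s. -/
theorem primary_decomposition_exists {R : Type*} [CommRing R] [IsNoetherianRing R]
    (a : Ideal R) (ha : a ≠ ⊤) :
    ∃ (s : ℕ) (q : Fin s → Ideal R),
      (∀ i, (q i).IsPrimary) ∧ a = ⨅ i, q i := by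
  obtain ⟨s, hs, hprim⟩ := Ideal.isLasker R R a
  refine ⟨s.card, fun i => (s.equivFin.symm i : Ideal R),
    fun i => hprim (s.equivFin.symm i).2, ?_⟩
  have h1 : a = ⨅ i : s, (i : Ideal R) := by
    rw [← hs, Finset.inf_eq_iInf, iInf_subtype]
    rfl
  exact h1.trans (Equiv.iInf_comp (g := fun i : s => (i : Ideal R)) s.equivFin.symm).symm
end

section
/- Let K be an algebraically closed field and let a and b be ideals of K[x₁,…,xₙ]. If every element of b vanishes at every common zero of a in Kⁿ, then there exists an integer k ≥ 1 with b^k ⊆ a. -/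
theorem nullstellensatz_ideal_version {K : Type*} [Field K] [IsAlgClosed K] {n : ℕ}
    (a b : Ideal (MvPolynomial (Fin n) K))
    (h : ∀ f ∈ b, ∀ ξ : Fin n → K, (∀ g ∈ a, MvPolynomial.eval ξ g = 0) →
      MvPolynomial.eval ξ f = 0) :
    ∃ k : ℕ, 1 ≤ k ∧ b ^ k ≤ a := by
  have hb : b ≤ a.radical := by
    rw [← MvPolynomial.vanishingIdeal_zeroLocus_eq_radical (K := K)]
    intro f hf
    rw [MvPolynomial.mem_vanishingIdeal_iff]
    intro ξ hξ
    simpa [MvPolynomial.coe_aeval_eq_eval] using h f hf ξ (by simpa [MvPolynomial.coe_aeval_eq_eval] using MvPolynomial.mem_zeroLocus_iff.mp hξ)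
  obtain ⟨k, hk⟩ := Ideal.exists_pow_le_of_le_radical_of_fg hb
    (IsNoetherian.noetherian b)
  exact ⟨max k 1, le_max_right _ _, le_trans (Ideal.pow_le_pow_right (le_max_left _ _)) hk⟩
end

section
/- Let K be an infinite field and consider a system of linear equations c_{11}u₁ + ⋯ + c_{1p}u_p = c₁, …, c_{q1}u₁ + ⋯ + c_{qp}u_p = c_q, where all coefficients c_{ij} and c_i are polynomials in K[t]. If for every value t₀ ∈ K the specialized system (obtained by evaluating all coefficients at t = t₀) has a solution u₁,…,u_p ∈ K, then the original system has a solution with u₁,…,u_p in the field of rational functions K(t). -/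
set_option synthInstance.maxHeartbeats 1000000
set_option maxHeartbeats 1000000

open Polynomial

theorem linear_system_rational_solution {K : Type*} [Field K] [Infinite K] {p q : ℕ}
    (c : Fin q → Fin p → Polynomial K) (d : Fin q → Polynomial K)
    (h : ∀ t₀ : K, ∃ u : Fin p → K,
      ∀ i, ∑ j, (c i j).eval t₀ * u j = (d i).eval t₀) :
    ∃ u : Fin p → RatFunc K,
      ∀ i, ∑ j, algebraMap (Polynomial K) (RatFunc K) (c i j) * u j =
        algebraMap (Polynomial K) (RatFunc K) (d i) := by
  classical
  set A := algebraMap (Polynomial K) (RatFunc K) with hA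
  set cols : Fin p → (Fin q → RatFunc K) := fun j i => A (c i j) with hcols
  set d' : Fin q → RatFunc K := fun i => A (d i) with hd'
  have hmem : d' ∈ Submodule.span (RatFunc K) (Set.range cols) := by
    by_contra hmem
    obtain ⟨φ, hφd, hφmap⟩ :=
      Submodule.exists_dual_map_eq_bot_of_notMem hmem inferInstance
    have hφcols : ∀ j, φ (cols j) = 0 := by
      intro j
      have : φ (cols j) ∈ (Submodule.span (RatFunc K) (Set.range cols)).map φ :=
        Submodule.mem_map_of_mem (Submodule.subset_span ⟨j, rfl⟩)
      rwa [hφmap, Submodule.mem_bot] at this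
    -- represent φ
    set y : Fin q → RatFunc K := fun i => φ (Pi.single i 1) with hy
    have hφ_eq : ∀ v : Fin q → RatFunc K, φ v = ∑ i, v i * y i := by
      intro v
      have hv : v = ∑ i, v i • (Pi.single i 1 : Fin q → RatFunc K) := by
        funext k
        simp [Finset.sum_apply, Pi.single_apply, mul_comm]
      conv_lhs => rw [hv]
      rw [map_sum]
      simp [smul_eq_mul]
      rfl
    obtain ⟨b, hb⟩ := IsLocalization.exist_integer_multiples_of_finite
      (nonZeroDivisors (Polynomial K)) y
    choose z hz using hb
    have hAinj : Function.Injective A := IsFractionRing.injective (Polynomial K) (RatFunc K)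
    have hAz : ∀ i, A (z i) = A (b : Polynomial K) * y i := by
      intro i
      rw [hz i, Algebra.smul_def]
    have key1 : ∀ j, ∑ i, z i * c i j = 0 := by
      intro j
      apply hAinj
      rw [map_sum, map_zero]
      calc ∑ i, A (z i * c i j) = A (b : Polynomial K) * ∑ i, A (c i j) * y i := by
            rw [Finset.mul_sum]
            refine Finset.sum_congr rfl fun i _ => ?_
            rw [map_mul, hAz i]; ring
        _ = A (b : Polynomial K) * φ (cols j) := by rw [hφ_eq (cols j)]
        _ = 0 := by rw [hφcols j, mul_zero]
    set g : Polynomial K := ∑ i, z i * d i with hg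
    have hAg : A g = A (b : Polynomial K) * φ d' := by
      rw [hg, map_sum, hφ_eq d']
      rw [Finset.mul_sum]
      refine Finset.sum_congr rfl fun i _ => ?_
      rw [map_mul, hAz i]; ring
    have hgne : g ≠ 0 := by
      intro h0
      rw [h0, map_zero] at hAg
      have hbne : A (b : Polynomial K) ≠ 0 := by
        simpa [hA, map_eq_zero_iff A hAinj] using nonZeroDivisors.coe_ne_zero b
      exact hφd (by
        rcases mul_eq_zero.mp hAg.symm with h1 | h1
        · exact absurd h1 hbne
        · exact h1)
    -- pick t₀ not a root of g
    obtain ⟨t₀, ht₀⟩ := Infinite.exists_notMem_finset g.roots.toFinset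
    have hgt : g.eval t₀ ≠ 0 := by
      intro he
      exact ht₀ (Multiset.mem_toFinset.mpr ((Polynomial.mem_roots hgne).mpr he))
    obtain ⟨u, hu⟩ := h t₀
    apply hgt
    calc g.eval t₀ = ∑ i, (z i).eval t₀ * (d i).eval t₀ := by
          simp [hg, Polynomial.eval_finset_sum]
      _ = ∑ i, (z i).eval t₀ * ∑ j, (c i j).eval t₀ * u j := by
          refine Finset.sum_congr rfl fun i _ => ?_
          rw [hu i]
      _ = ∑ j, (∑ i, (z i).eval t₀ * (c i j).eval t₀) * u j := by
          simp only [Finset.mul_sum, Finset.sum_mul]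
          rw [Finset.sum_comm]
          exact Finset.sum_congr rfl fun j _ => Finset.sum_congr rfl fun i _ => by ring
      _ = 0 := by
          refine Finset.sum_eq_zero fun j _ => ?_
          have : ∑ i, (z i).eval t₀ * (c i j).eval t₀ = 0 := by
            have := congrArg (Polynomial.eval t₀) (key1 j)
            simpa [Polynomial.eval_finset_sum] using this
          rw [this, zero_mul]
  rw [Submodule.mem_span_range_iff_exists_fun] at hmem
  obtain ⟨u, hu⟩ := hmem
  refine ⟨u, fun i => ?_⟩
  have := congrFun hu i
  simpa [hcols, hd', Finset.sum_apply, smul_eq_mul, mul_comm] using this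
end

section
/- Let K be an algebraically closed field and let a be an ideal of K[x₁,…,xₙ] whose set of common zeros in Kⁿ is finite, say {P₁,…,P_s}. For a point P = (ξ₁,…,ξₙ) let m_P denote the maximal ideal (x₁−ξ₁,…,xₙ−ξₙ). Then there exists an integer ρ ≥ 1, depending only on a, such that every polynomial f with f ∈ a + m_{P_i}^ρ for all i = 1,…,s satisfies f ∈ a. -/
open MvPolynomial

private lemma finset_inf_le_prod_of_coprime {R : Type*} [CommRing R] {ι : Type*}
    (s : Finset ι) (f : ι → Ideal R)
    (h : (s : Set ι).Pairwise fun i j => f i ⊔ f j = ⊤) :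
    s.inf f ≤ ∏ i ∈ s, f i := by
  classical
  induction s using Finset.cons_induction with
  | empty => simp
  | cons a s ha ih =>
    rw [Finset.prod_cons, Finset.inf_cons]
    have hcop : f a ⊔ ∏ i ∈ s, f i = ⊤ :=
      Ideal.sup_prod_eq_top fun i hi =>
        h (Finset.mem_cons_self a s) (Finset.mem_cons_of_mem hi)
          (by rintro rfl; exact ha hi)
    have ihle : f a ⊓ s.inf f ≤ f a ⊓ ∏ i ∈ s, f i :=
      inf_le_inf_left _ (ih (h.mono (by intro x hx; simp only [Finset.coe_cons, Set.mem_insert_iff]; exact Or.inr hx)))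
    exact ihle.trans (Ideal.mul_eq_inf_of_coprime hcop).ge

private lemma prod_sup_le_sup_prod {R : Type*} [CommRing R] {ι : Type*}
    (s : Finset ι) (a : Ideal R) (g : ι → Ideal R) :
    ∏ i ∈ s, (a ⊔ g i) ≤ a ⊔ ∏ i ∈ s, g i := by
  classical
  induction s using Finset.cons_induction with
  | empty => simp
  | cons i s hi ih =>
    rw [Finset.prod_cons, Finset.prod_cons]
    calc (a ⊔ g i) * ∏ j ∈ s, (a ⊔ g j) ≤ (a ⊔ g i) * (a ⊔ ∏ j ∈ s, g j) :=
          Ideal.mul_mono_right ih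
      _ ≤ a ⊔ g i * ∏ j ∈ s, g j := by
          rw [Ideal.sup_mul, Ideal.mul_sup, Ideal.mul_sup]
          refine sup_le (sup_le ?_ ?_) (sup_le ?_ ?_)
          · exact le_sup_of_le_left Ideal.mul_le_right
          · exact le_sup_of_le_left Ideal.mul_le_left
          · exact le_sup_of_le_left Ideal.mul_le_right
          · exact le_sup_right

theorem noether_theorem_finite_zeros {K : Type*} [Field K] [IsAlgClosed K] {n : ℕ}
    (a : Ideal (MvPolynomial (Fin n) K))
    (hfin : {ξ : Fin n → K | ∀ g ∈ a, MvPolynomial.eval ξ g = 0}.Finite) :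
    ∃ ρ : ℕ, 1 ≤ ρ ∧ ∀ f : MvPolynomial (Fin n) K,
      (∀ P : Fin n → K, (∀ g ∈ a, MvPolynomial.eval P g = 0) →
        f ∈ a + (Ideal.span (Set.range fun i =>
          MvPolynomial.X i - MvPolynomial.C (P i))) ^ ρ) →
      f ∈ a := by
  classical
  set m : (Fin n → K) → Ideal (MvPolynomial (Fin n) K) :=
    fun P => Ideal.span (Set.range fun i => X i - C (P i)) with hm
  -- each m P is contained in the vanishing ideal of {P}
  have hmle : ∀ P : Fin n → K, m P ≤ MvPolynomial.vanishingIdeal K {P} := by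
    intro P
    rw [hm, Ideal.span_le]
    rintro _ ⟨i, rfl⟩
    rw [SetLike.mem_coe, mem_vanishingIdeal_singleton_iff]
    simp
  -- distinct points give comaximal ideals
  have hcop : ∀ P Q : Fin n → K, P ≠ Q → m P ⊔ m Q = ⊤ := by
    intro P Q hPQ
    obtain ⟨i, hi⟩ := Function.ne_iff.mp hPQ
    have h1 : (X i - C (P i) : MvPolynomial (Fin n) K) ∈ m P ⊔ m Q :=
      Ideal.mem_sup_left (Ideal.subset_span ⟨i, rfl⟩)
    have h2 : (X i - C (Q i) : MvPolynomial (Fin n) K) ∈ m P ⊔ m Q :=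
      Ideal.mem_sup_right (Ideal.subset_span ⟨i, rfl⟩)
    have h3 : (C (Q i - P i) : MvPolynomial (Fin n) K) ∈ m P ⊔ m Q := by
      have := Submodule.sub_mem _ h1 h2
      simpa [sub_sub_sub_cancel_left, map_sub] using this
    exact Ideal.eq_top_of_isUnit_mem _ h3
      ((isUnit_iff_ne_zero.mpr (sub_ne_zero.mpr (Ne.symm hi))).map
        (C : K →+* MvPolynomial (Fin n) K))
  -- ρ with radical ^ ρ ≤ a
  obtain ⟨ρ₀, hρ₀⟩ := Ideal.exists_radical_pow_le_of_fg a (IsNoetherian.noetherian _)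
  refine ⟨max ρ₀ 1, le_max_right _ _, ?_⟩
  set ρ := max ρ₀ 1 with hρdef
  intro f hf
  set Z := {ξ : Fin n → K | ∀ g ∈ a, MvPolynomial.eval ξ g = 0} with hZ
  have hZeq : Z = MvPolynomial.zeroLocus K a := rfl
  set s : Finset (Fin n → K) := hfin.toFinset with hs
  -- f belongs to the inf of the ideals a ⊔ (m P) ^ ρ
  have hfinf : f ∈ s.inf fun P => a ⊔ (m P) ^ ρ := by
    rw [Submodule.mem_finsetInf]
    intro P hP
    have := hf P (by have h' : P ∈ Z := (by simpa [hs] using hP); exact h')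
    rwa [Submodule.add_eq_sup] at this
  -- pairwise comaximality of a ⊔ (m P) ^ ρ on s
  have hpair : (↑s : Set (Fin n → K)).Pairwise
      fun P Q => (a ⊔ (m P) ^ ρ) ⊔ (a ⊔ (m Q) ^ ρ) = ⊤ := by
    intro P _ Q _ hPQ
    have : (m P) ^ ρ ⊔ (m Q) ^ ρ = ⊤ := Ideal.pow_sup_pow_eq_top (hcop P Q hPQ)
    rw [eq_top_iff, ← this]
    exact sup_le (le_sup_of_le_left le_sup_right) (le_sup_of_le_right le_sup_right)
  -- the product of the m P is contained in the radical of a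
  have hinfrad : s.inf m ≤ a.radical := by
    rw [← MvPolynomial.vanishingIdeal_zeroLocus_eq_radical (K := K), ← hZeq]
    intro p hp
    rw [mem_vanishingIdeal_iff]
    intro x hx
    have hxs : x ∈ s := by simpa [hs] using hx
    have : p ∈ m x := (Submodule.mem_finsetInf.mp hp) x hxs
    exact (mem_vanishingIdeal_singleton_iff x p).mp (hmle x this)
  -- put everything together
  have key : s.inf (fun P => a ⊔ (m P) ^ ρ) ≤ a := by
    refine (finset_inf_le_prod_of_coprime s _ hpair).trans ?_
    refine (prod_sup_le_sup_prod s a fun P => (m P) ^ ρ).trans ?_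
    refine sup_le le_rfl ?_
    have h1 : ∏ P ∈ s, (m P) ^ ρ = (∏ P ∈ s, m P) ^ ρ := Finset.prod_pow s ρ m
    rw [h1]
    have h2 : (∏ P ∈ s, m P) ^ ρ ≤ a.radical ^ ρ :=
      Ideal.pow_right_mono (Ideal.prod_le_inf.trans hinfrad) ρ
    refine h2.trans ?_
    calc a.radical ^ ρ ≤ a.radical ^ ρ₀ :=
          Ideal.pow_le_pow_right (le_max_left _ _)
      _ ≤ a := hρ₀
  exact key hfinf
end

section
/- Let K be an algebraically closed field and let f, φ, ψ ∈ K[x,y] be polynomials in two variables such that f vanishes at every common zero of φ and ψ in K². Then some power of f can be expressed as a linear combination of φ and ψ: there exist an integer ρ ≥ 1 and polynomials A, B ∈ K[x,y] with f^ρ = Aφ + Bψ. -/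
theorem netto_theorem {K : Type*} [Field K] [IsAlgClosed K]
    (f φ ψ : MvPolynomial (Fin 2) K)
    (h : ∀ ξ : Fin 2 → K, MvPolynomial.eval ξ φ = 0 → MvPolynomial.eval ξ ψ = 0 →
      MvPolynomial.eval ξ f = 0) :
    ∃ (ρ : ℕ) (A B : MvPolynomial (Fin 2) K),
      1 ≤ ρ ∧ f ^ ρ = A * φ + B * ψ := by
  set I : Ideal (MvPolynomial (Fin 2) K) := Ideal.span {φ, ψ} with hI
  have hf : f ∈ MvPolynomial.vanishingIdeal K (MvPolynomial.zeroLocus K I) := by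
    rw [MvPolynomial.mem_vanishingIdeal_iff]
    intro x hx
    exact h x (hx φ (Ideal.subset_span (by simp))) (hx ψ (Ideal.subset_span (by simp)))
  rw [MvPolynomial.vanishingIdeal_zeroLocus_eq_radical] at hf
  obtain ⟨n, hn⟩ := hf
  have hmem : f ^ (max n 1) ∈ I := by
    have : f ^ (max n 1) = f ^ (max n 1 - n) * f ^ n := by
      rw [← pow_add, Nat.sub_add_cancel (le_max_left n 1)]
    rw [this]
    exact I.mul_mem_left _ hn
  rw [hI, Ideal.mem_span_pair] at hmem
  obtain ⟨A, B, hAB⟩ := hmem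
  exact ⟨max n 1, A, B, le_max_right n 1, hAB.symm⟩
end

section
/- Let K be a field, let a = (F₁,…,F_k) be an ideal of K[x₁,…,xₙ], and let F ∈ K[x₁,…,xₙ]. If F can be written as F = P₁F₁ + ⋯ + P_kF_k with formal power series P₁,…,P_k ∈ K[[x₁,…,xₙ]] (i.e. F lies in the ideal generated by F₁,…,F_k in the formal power series ring), then there exists a polynomial φ ∈ K[x₁,…,xₙ] whose constant term φ(0,…,0) is nonzero such that φ·F ∈ a. -/
open MvPolynomial

private lemma monomial_mem_pow_span_X {K : Type*} [Field K] {n : ℕ}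
    (m : Fin n →₀ ℕ) (c : K) :
    (monomial m c : MvPolynomial (Fin n) K) ∈
      (Ideal.span (Set.range (X : Fin n → MvPolynomial (Fin n) K))) ^
        (m.sum fun _ e => e) := by
  induction m using Finsupp.induction with
  | zero => simp
  | single_add i e m hi he ih =>
      rw [monomial_single_add,
        Finsupp.sum_add_index' (fun _ => rfl) (fun _ _ _ => rfl),
        Finsupp.sum_single_index rfl, pow_add]
      exact Ideal.mul_mem_mul
        (Ideal.pow_mem_pow (Ideal.subset_span (Set.mem_range_self i)) e) ih

private lemma poly_mem_pow_span_X {K : Type*} [Field K] {n : ℕ} (d : ℕ)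
    (p : MvPolynomial (Fin n) K)
    (hp : ∀ m ∈ p.support, d ≤ m.sum fun _ e => e) :
    p ∈ (Ideal.span (Set.range (X : Fin n → MvPolynomial (Fin n) K))) ^ d := by
  rw [p.as_sum]
  refine Submodule.sum_mem _ fun m hm => ?_
  exact Ideal.pow_le_pow_right (hp m hm) (monomial_mem_pow_span_X m _)

set_option maxHeartbeats 1000000 in
set_option synthInstance.maxHeartbeats 400000 in
theorem lasker_noether_power_series {K : Type*} [Field K] {n k : ℕ}
    (Fs : Fin k → MvPolynomial (Fin n) K) (F : MvPolynomial (Fin n) K)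
    (h : (F : MvPowerSeries (Fin n) K) ∈
      Ideal.span (Set.range fun i => ((Fs i : MvPowerSeries (Fin n) K)))) :
    ∃ φ : MvPolynomial (Fin n) K,
      MvPolynomial.eval (0 : Fin n → K) φ ≠ 0 ∧
      φ * F ∈ Ideal.span (Set.range Fs) := by
  classical
  set a : Ideal (MvPolynomial (Fin n) K) := Ideal.span (Set.range Fs) with ha
  set M : Ideal (MvPolynomial (Fin n) K) :=
    Ideal.span (Set.range (X : Fin n → MvPolynomial (Fin n) K)) with hM
  obtain ⟨c, hc⟩ := (Ideal.mem_span_range_iff_exists_fun).mp h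
  set mk : MvPolynomial (Fin n) K →+* MvPolynomial (Fin n) K ⧸ a :=
    Ideal.Quotient.mk a with hmk
  set I : Ideal (MvPolynomial (Fin n) K ⧸ a) := M.map mk with hI
  -- key: mk F ∈ I ^ d for every d
  have key : ∀ d : ℕ, mk F ∈ I ^ d := by
    intro d
    set nd : Fin n →₀ ℕ := Finsupp.equivFunOnFinite.symm fun _ => d with hnd
    set p : Fin k → MvPolynomial (Fin n) K := fun j =>
      ∑ m ∈ (Finset.Iic nd).filter (fun m => (m.sum fun _ e => e) < d),
        monomial m (MvPowerSeries.coeff m (c j)) with hpdef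
    have hle : ∀ (m : Fin n →₀ ℕ) (i : Fin n), m i ≤ m.sum fun _ e => e := by
      intro m i
      by_cases hmem : i ∈ m.support
      · exact Finset.single_le_sum (fun _ _ => Nat.zero_le _) hmem
      · simp [Finsupp.notMem_support_iff.mp hmem]
    have hp : ∀ (j : Fin k) (m : Fin n →₀ ℕ), (m.sum fun _ e => e) < d →
        MvPowerSeries.coeff m (c j - (↑(p j) : MvPowerSeries (Fin n) K)) = 0 := by
      intro j m hm
      have hmem : m ∈ (Finset.Iic nd).filter (fun m => (m.sum fun _ e => e) < d) := by
        refine Finset.mem_filter.mpr ⟨Finset.mem_Iic.mpr ?_, hm⟩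
        intro i
        calc m i ≤ m.sum fun _ e => e := hle m i
          _ ≤ d := hm.le
        -- nd i = d
      have : (MvPolynomial.coeff m (p j)) = MvPowerSeries.coeff m (c j) := by
        rw [hpdef]
        simp only [MvPolynomial.coeff_sum, MvPolynomial.coeff_monomial]
        rw [Finset.sum_ite_eq' _ m (fun m' => MvPowerSeries.coeff m' (c j))]
        simp [hmem]
      rw [map_sub, MvPolynomial.coeff_coe, this, sub_self]
    set G : MvPolynomial (Fin n) K := F - ∑ j, p j * Fs j with hG
    have hGcoe : (↑G : MvPowerSeries (Fin n) K) =
        ∑ j, (c j - ↑(p j)) * ↑(Fs j) := by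
      have h1 : (↑G : MvPowerSeries (Fin n) K) =
          ↑F - ∑ j, (↑(p j) : MvPowerSeries (Fin n) K) * ↑(Fs j) := by
        show coeToMvPowerSeries.ringHom G =
          coeToMvPowerSeries.ringHom F -
            ∑ j, coeToMvPowerSeries.ringHom (p j) * coeToMvPowerSeries.ringHom (Fs j)
        rw [hG, map_sub, map_sum]
        simp only [map_mul]
      rw [h1, Finset.sum_congr rfl fun j _ => sub_mul (c j) (↑(p j)) (↑(Fs j)),
        Finset.sum_sub_distrib, hc]
    have hGmem : G ∈ M ^ d := by
      apply poly_mem_pow_span_X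
      intro m hm
      by_contra hlt
      push_neg at hlt
      apply MvPolynomial.mem_support_iff.mp hm
      have : MvPowerSeries.coeff m (↑G : MvPowerSeries (Fin n) K) = 0 := by
        rw [hGcoe, map_sum]
        refine Finset.sum_eq_zero fun j _ => ?_
        rw [MvPowerSeries.coeff_mul]
        refine Finset.sum_eq_zero fun uv huv => ?_
        have huvsum : (uv.1 + uv.2) = m := Finset.HasAntidiagonal.mem_antidiagonal.mp huv
        have : (uv.1.sum fun _ e => e) < d := by
          refine lt_of_le_of_lt ?_ hlt
          calc (uv.1.sum fun _ e => e)
              ≤ (uv.1.sum fun _ e => e) + (uv.2.sum fun _ e => e) := Nat.le_add_right _ _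
            _ = ((uv.1 + uv.2).sum fun _ e => e) :=
                (Finsupp.sum_add_index' (fun _ => rfl) (fun _ _ _ => rfl)).symm
            _ = m.sum fun _ e => e := by rw [huvsum]
        rw [hp j uv.1 this, zero_mul]
      rwa [MvPolynomial.coeff_coe] at this
    have hsum_mem : (∑ j, p j * Fs j) ∈ a := by
      refine Submodule.sum_mem _ fun j _ => ?_
      exact Ideal.mul_mem_left _ _ (Ideal.subset_span ⟨j, rfl⟩)
    have : mk F = mk G := by
      rw [hG, map_sub, (Ideal.Quotient.eq_zero_iff_mem).mpr hsum_mem, sub_zero]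
    rw [this, ← Ideal.map_pow]
    exact Ideal.mem_map_of_mem mk hGmem
  -- Krull intersection / Nakayama
  have hmem : mk F ∈ (⨅ i : ℕ, I ^ i • ⊤ : Submodule (MvPolynomial (Fin n) K ⧸ a)
      (MvPolynomial (Fin n) K ⧸ a)) := by
    rw [Submodule.mem_iInf]
    intro i
    rw [smul_eq_mul, Ideal.mul_top]
    exact key i
  obtain ⟨r, hr⟩ := (Ideal.mem_iInf_smul_pow_eq_bot_iff I (mk F)).mp hmem
  obtain ⟨ρ, hρM, hρ⟩ := Ideal.mem_map_iff_of_surjective mk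
    Ideal.Quotient.mk_surjective |>.mp r.2
  refine ⟨1 - ρ, ?_, ?_⟩
  · have heval : MvPolynomial.eval (0 : Fin n → K) ρ = 0 := by
      have hker : M ≤ RingHom.ker (MvPolynomial.eval (0 : Fin n → K)) := by
        rw [hM, Ideal.span_le]
        rintro _ ⟨i, rfl⟩
        simp [RingHom.mem_ker]
      exact hker hρM
    have : MvPolynomial.eval (0 : Fin n → K) (1 - ρ) = 1 := by
      rw [map_sub, map_one, heval, sub_zero]
    rw [this]
    exact one_ne_zero
  · rw [← Ideal.Quotient.eq_zero_iff_mem]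
    show mk ((1 - ρ) * F) = 0
    rw [map_mul, map_sub, map_one, hρ, sub_mul, one_mul]
    rw [show (r : MvPolynomial (Fin n) K ⧸ a) * mk F = mk F from hr, sub_self]
end
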